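/- Let n ≥ 2 and let A be a real symmetric n×n matrix with trace(A) = 0. Then trace(A³) ≥ -((n-2)/√(n(n-1))) · ‖A‖³, where ‖A‖ = √(trace(A²)) denotes the Frobenius norm of A. -/

import Mathlib

lemma okumura_scalar {n : ℕ} (hn : 2 ≤ n) (x : Fin n → ℝ) (hsum : ∑ i, x i = 0) :
    ∑ i, (x i)^3 ≥ -(((n:ℝ)-2)/Real.sqrt ((n:ℝ)*((n:ℝ)-1))) * Real.sqrt (∑ i, (x i)^2) ^ 3 := by
  have hn1 : (2:ℝ) ≤ (n:ℝ) := by exact_mod_cast hn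
  set p : ℝ := ∑ i, (x i)^2 with hpdef
  have hp : 0 ≤ p := Finset.sum_nonneg fun i _ => sq_nonneg _
  set s : ℝ := Real.sqrt p with hsdef
  have hs0 : 0 ≤ s := Real.sqrt_nonneg _
  have hs2 : s^2 = p := Real.sq_sqrt hp
  have hnn : (0:ℝ) < (n:ℝ) * ((n:ℝ)-1) := by nlinarith
  set c : ℝ := Real.sqrt ((n:ℝ)*((n:ℝ)-1)) with hcdef
  have hc : 0 < c := Real.sqrt_pos.mpr hnn
  have hc2 : c^2 = (n:ℝ)*((n:ℝ)-1) := Real.sq_sqrt hnn.le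
  set μ : ℝ := s / c with hμdef
  have hμ0 : 0 ≤ μ := div_nonneg hs0 hc.le
  set m : ℝ := -(((n:ℝ)-1) * μ) with hmdef
  -- each x i ≥ m
  have hm : ∀ i, m ≤ x i := by
    intro i
    have hkey : (n:ℝ) * (x i)^2 ≤ ((n:ℝ)-1) * p := by
      have h := sq_sum_le_card_mul_sum_sq (s := Finset.univ.erase i) (f := x)
      have h1 : ∑ j ∈ Finset.univ.erase i, x j = - x i := by
        rw [Finset.sum_erase_eq_sub (Finset.mem_univ i), hsum]; ring
      have h2 : ∑ j ∈ Finset.univ.erase i, (x j)^2 = p - (x i)^2 := by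
        rw [Finset.sum_erase_eq_sub (Finset.mem_univ i)]
      have h3 : (Finset.univ.erase i).card = n - 1 := by
        rw [Finset.card_erase_of_mem (Finset.mem_univ i), Finset.card_univ, Fintype.card_fin]
      rw [h1, h2, h3] at h
      have h4 : ((n - 1 : ℕ) : ℝ) = (n:ℝ) - 1 := by
        have : 1 ≤ n := by omega
        push_cast [Nat.cast_sub this]; ring
      rw [h4] at h
      nlinarith [h]
    -- (x i)^2 ≤ ((n-1)μ)^2
    have hsq : (x i)^2 ≤ (((n:ℝ)-1)*μ)^2 := by
      have : (((n:ℝ)-1)*μ)^2 = ((n:ℝ)-1)^2 * s^2 / c^2 := by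
        rw [hμdef]; field_simp
      rw [this, hs2, hc2]
      rw [le_div_iff₀ hnn]
      nlinarith [hkey]
    nlinarith [sq_nonneg (x i + ((n:ℝ)-1)*μ), hμ0, mul_nonneg (sub_nonneg.mpr hn1) hμ0]
  have hnonneg : 0 ≤ ∑ i, (x i - m) * (x i - μ)^2 :=
    Finset.sum_nonneg fun i _ => mul_nonneg (by linarith [hm i]) (sq_nonneg _)
  have hexp : ∑ i, (x i - m) * (x i - μ)^2
      = (∑ i, (x i)^3) - (m + 2*μ)*p + (2*m*μ + μ^2)*(∑ i, x i) - (n:ℝ)*(m*μ^2) := by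
    have h : ∀ i, (x i - m) * (x i - μ)^2
        = (x i)^3 - (m + 2*μ)*(x i)^2 + (2*m*μ + μ^2)*(x i) - m*μ^2 := fun i => by ring
    simp_rw [h]
    rw [Finset.sum_sub_distrib, Finset.sum_add_distrib, Finset.sum_sub_distrib,
      ← Finset.mul_sum, ← Finset.mul_sum, Finset.sum_const, Finset.card_univ, Fintype.card_fin,
      nsmul_eq_mul, hpdef]
  rw [hexp, hsum] at hnonneg
  have hfin : (m + 2*μ)*p + (n:ℝ)*(m*μ^2) = -(((n:ℝ)-2)/c) * s^3 := by
    rw [hmdef, hμdef, ← hs2]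
    field_simp
    linear_combination (s^3) * hc2

  rw [mul_zero] at hnonneg
  have h1 : (m + 2 * μ) * p + (n:ℝ) * (m * μ ^ 2) ≤ ∑ i, (x i)^3 := by linarith
  calc -(((n:ℝ)-2)/c) * s^3 = (m + 2*μ)*p + (n:ℝ)*(m*μ^2) := hfin.symm
    _ ≤ ∑ i, (x i)^3 := h1


/-- Okumura inequality: for a trace-free real symmetric `n × n` matrix `A` (`n ≥ 2`),
`trace(A³) ≥ -((n-2)/√(n(n-1))) · ‖A‖³`, where `‖A‖ = √(trace(A²))` is the Frobenius norm. -/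
theorem okumura_inequality {n : ℕ} (hn : 2 ≤ n) (A : Matrix (Fin n) (Fin n) ℝ)
    (hA : A.IsSymm) (htr : A.trace = 0) :
    Matrix.trace (A * A * A) ≥
      -(((n : ℝ) - 2) / Real.sqrt ((n : ℝ) * ((n : ℝ) - 1))) *
        (Real.sqrt (Matrix.trace (A * A))) ^ 3 := by
  have hA' : A.IsHermitian := by
    rwa [Matrix.IsHermitian, Matrix.conjTranspose_eq_transpose_of_trivial]
  set U : Matrix (Fin n) (Fin n) ℝ := (Matrix.IsHermitian.eigenvectorUnitary hA' : Matrix (Fin n) (Fin n) ℝ) with hUdef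
  set D : Matrix (Fin n) (Fin n) ℝ := Matrix.diagonal (RCLike.ofReal ∘ hA'.eigenvalues) with hDdef
  have hAe : A = U * D * star U := hA'.spectral_theorem
  have hU : star U * U = 1 :=
    Matrix.mem_unitaryGroup_iff'.mp (Matrix.IsHermitian.eigenvectorUnitary hA').2
  have hUU : ∀ Z : Matrix (Fin n) (Fin n) ℝ, star U * (U * Z) = Z := fun Z => by
    rw [← Matrix.mul_assoc, hU, Matrix.one_mul]
  have key : ∀ X Y : Matrix (Fin n) (Fin n) ℝ,
      (U * X * star U) * (U * Y * star U) = U * (X * Y) * star U := by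
    intro X Y
    simp only [Matrix.mul_assoc]
    rw [hUU]
  have htrc : ∀ X : Matrix (Fin n) (Fin n) ℝ, (U * X * star U).trace = X.trace := by
    intro X
    rw [Matrix.trace_mul_cycle, hU, Matrix.one_mul]
  have h2 : (A * A).trace = ∑ i, (hA'.eigenvalues i)^2 := by
    conv_lhs => rw [hAe, key, htrc]
    rw [hDdef, Matrix.diagonal_mul_diagonal, Matrix.trace_diagonal]
    simp [sq]
  have h3 : (A * A * A).trace = ∑ i, (hA'.eigenvalues i)^3 := by
    conv_lhs => rw [hAe, key, key, htrc]
    rw [hDdef, Matrix.diagonal_mul_diagonal, Matrix.diagonal_mul_diagonal,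
      Matrix.trace_diagonal]
    simp [pow_succ, pow_two, mul_assoc]
  have hsum : ∑ i, hA'.eigenvalues i = 0 := by
    have := htrc D
    rw [← hAe] at this
    rw [htr, hDdef, Matrix.trace_diagonal] at this
    simpa using this.symm
  rw [h2, h3]
  exact okumura_scalar hn _ hsum
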